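/- Let $a < b$ be real numbers, $N$ a positive natural number, $\Delta x = (b-a)/N$, $x_k = a + k\,\Delta x$, and let $f : \mathbb{R} \to \mathbb{R}$ be twice continuously differentiable on $[a,b]$ with $|f''(x)| \le M$ for all $x \in [a,b]$. Then the composite trapezoidal sum $T_N = \sum_{k=1}^N \frac{f(x_{k-1})+f(x_k)}{2}\,\Delta x$ satisfies the error bound $\Big| \int_a^b f(x)\,dx - T_N \Big| \le \frac{M (b-a)^3}{12 N^2}$. -/

import Mathlib

open MeasureTheory Set Finset intervalIntegral

lemma trap_single (c d M : ℝ) (hcd : c ≤ d) (f f' f'' : ℝ → ℝ)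
    (hfc : ContinuousOn f (Set.Icc c d))
    (hf'c : ContinuousOn f' (Set.Icc c d))
    (hf''c : ContinuousOn f'' (Set.Icc c d))
    (hd1 : ∀ t ∈ Set.Ioo c d, HasDerivAt f (f' t) t)
    (hd2 : ∀ t ∈ Set.Ioo c d, HasDerivAt f' (f'' t) t)
    (hM : ∀ t ∈ Set.Icc c d, |f'' t| ≤ M) :
    |(∫ t in c..d, f t) - (f c + f d) / 2 * (d - c)| ≤ M * (d - c) ^ 3 / 12 := by
  have huIcc : Set.uIcc c d = Set.Icc c d := Set.uIcc_of_le hcd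
  have hintf : IntervalIntegrable f volume c d := by
    apply ContinuousOn.intervalIntegrable; rwa [huIcc]
  have hintf' : IntervalIntegrable (fun t => (t - (c + d) / 2) * f' t) volume c d := by
    apply ContinuousOn.intervalIntegrable; rw [huIcc]
    exact (continuousOn_id.sub continuousOn_const).mul hf'c
  have hintK : IntervalIntegrable (fun t => (t - c) * (t - d) / 2 * f'' t) volume c d := by
    apply ContinuousOn.intervalIntegrable; rw [huIcc]
    exact (((continuousOn_id.sub continuousOn_const).mul
      (continuousOn_id.sub continuousOn_const)).div_const 2).mul hf''c
  -- Step A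
  have stepA : (∫ t in c..d, (f t + (t - (c + d) / 2) * f' t)) =
      (d - c) / 2 * (f d + f c) := by
    have := intervalIntegral.integral_eq_sub_of_hasDerivAt_of_le hcd
      (f := fun t => (t - (c + d) / 2) * f t)
      (f' := fun t => f t + (t - (c + d) / 2) * f' t)
      ((continuousOn_id.sub continuousOn_const).mul hfc)
      (fun t ht => by
        have h1 := (hd1 t ht)
        have : HasDerivAt (fun t => (t - (c + d) / 2) * f t)
            (1 * f t + (t - (c + d) / 2) * f' t) t :=
          ((hasDerivAt_id t).sub_const _).mul h1
        simpa using this)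
      (hintf.add hintf')
    rw [this]; ring
  -- Step B
  have stepB : (∫ t in c..d, ((t - (c + d) / 2) * f' t + (t - c) * (t - d) / 2 * f'' t)) = 0 := by
    have := intervalIntegral.integral_eq_sub_of_hasDerivAt_of_le hcd
      (f := fun t => (t - c) * (t - d) / 2 * f' t)
      (f' := fun t => (t - (c + d) / 2) * f' t + (t - c) * (t - d) / 2 * f'' t)
      ((((continuousOn_id.sub continuousOn_const).mul
        (continuousOn_id.sub continuousOn_const)).div_const 2).mul hf'c)
      (fun t ht => by
        have h2 := hd2 t ht
        have hv : HasDerivAt (fun t => (t - c) * (t - d) / 2)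
            (t - (c + d) / 2) t := by
          have : HasDerivAt (fun t => (t - c) * (t - d) / 2)
              ((1 * (t - d) + (t - c) * 1) / 2) t :=
            (((hasDerivAt_id t).sub_const _).mul ((hasDerivAt_id t).sub_const _)).div_const 2
          convert this using 1 <;> ring
        have : HasDerivAt (fun y => (y - c) * (y - d) / 2 * f' y)
            ((t - (c + d) / 2) * f' t + (t - c) * (t - d) / 2 * f'' t) t := hv.mul h2
        convert this using 1 <;> ring)
      (hintf'.add hintK)
    rw [this]; ring
  -- combine
  have key : (∫ t in c..d, f t) - (f c + f d) / 2 * (d - c) =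
      ∫ t in c..d, (t - c) * (t - d) / 2 * f'' t := by
    have e1 : (∫ t in c..d, (f t + (t - (c + d) / 2) * f' t)) =
        (∫ t in c..d, f t) + ∫ t in c..d, (t - (c + d) / 2) * f' t :=
      intervalIntegral.integral_add hintf hintf'
    have e2 : (∫ t in c..d, ((t - (c + d) / 2) * f' t + (t - c) * (t - d) / 2 * f'' t)) =
        (∫ t in c..d, (t - (c + d) / 2) * f' t) + ∫ t in c..d, (t - c) * (t - d) / 2 * f'' t :=
      intervalIntegral.integral_add hintf' hintK
    rw [e1] at stepA; rw [e2] at stepB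
    linarith
  rw [key]
  -- Step D
  have habs : |∫ t in c..d, (t - c) * (t - d) / 2 * f'' t| ≤
      ∫ t in c..d, |(t - c) * (t - d) / 2 * f'' t| :=
    intervalIntegral.abs_integral_le_integral_abs hcd
  have hintA : IntervalIntegrable (fun t => |(t - c) * (t - d) / 2 * f'' t|) volume c d := hintK.abs
  have hintg : IntervalIntegrable (fun t => M * ((t - c) * (d - t) / 2)) volume c d := by
    apply ContinuousOn.intervalIntegrable; rw [huIcc]; fun_prop
  have hmono : (∫ t in c..d, |(t - c) * (t - d) / 2 * f'' t|) ≤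
      ∫ t in c..d, M * ((t - c) * (d - t) / 2) := by
    apply intervalIntegral.integral_mono_on hcd hintA hintg
    intro t ht
    have h1 : (0:ℝ) ≤ t - c := by linarith [ht.1]
    have h2 : (0:ℝ) ≤ d - t := by linarith [ht.2]
    have : |(t - c) * (t - d) / 2 * f'' t| = (t - c) * (d - t) / 2 * |f'' t| := by
      rw [abs_mul]
      congr 1
      rw [abs_div, abs_two, abs_mul]
      rw [abs_of_nonneg h1, abs_of_nonpos (by linarith : t - d ≤ 0)]
      ring
    rw [this]
    calc (t - c) * (d - t) / 2 * |f'' t| ≤ (t - c) * (d - t) / 2 * M := by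
          apply mul_le_mul_of_nonneg_left (hM t ht) (by positivity)
      _ = M * ((t - c) * (d - t) / 2) := by ring
  have hcomp : (∫ t in c..d, M * ((t - c) * (d - t) / 2)) = M * (d - c) ^ 3 / 12 := by
    have hbase : (∫ t in c..d, (t - c) * (d - t)) = (d - c) ^ 3 / 6 := by
      have hF : ∀ t ∈ Set.uIcc c d, HasDerivAt
          (fun t => t ^ 2 * (c + d) / 2 - t ^ 3 / 3 - c * d * t) ((t - c) * (d - t)) t := by
        intro t _
        have hp2 : HasDerivAt (fun t : ℝ => t ^ 2) (2 * t) t := by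
          simpa using hasDerivAt_pow 2 t
        have hp3 : HasDerivAt (fun t : ℝ => t ^ 3) (3 * t ^ 2) t := by
          simpa using hasDerivAt_pow 3 t
        have h : HasDerivAt (fun t => t ^ 2 * (c + d) / 2 - t ^ 3 / 3 - c * d * t)
            (2 * t * (c + d) / 2 - 3 * t ^ 2 / 3 - c * d * 1) t := (((hp2.mul_const (c + d)).div_const 2).sub (hp3.div_const 3)).sub
          ((hasDerivAt_id t).const_mul (c * d))
        convert h using 1 <;> ring
      rw [intervalIntegral.integral_eq_sub_of_hasDerivAt hF
        (ContinuousOn.intervalIntegrable (by rw [huIcc]; fun_prop))]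
      ring
    have : (fun t => M * ((t - c) * (d - t) / 2)) = fun t => M / 2 * ((t - c) * (d - t)) :=
      funext fun t => by ring
    rw [this, intervalIntegral.integral_const_mul, hbase]
    ring
  calc |∫ t in c..d, (t - c) * (t - d) / 2 * f'' t| ≤
        ∫ t in c..d, |(t - c) * (t - d) / 2 * f'' t| := habs
    _ ≤ ∫ t in c..d, M * ((t - c) * (d - t) / 2) := hmono
    _ = M * (d - c) ^ 3 / 12 := hcomp

theorem trapezoidal_composite_error_bound
    (a b M : ℝ) (hab : a < b) (N : ℕ) (hN : 0 < N) (f : ℝ → ℝ)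
    (hf : ContDiffOn ℝ 2 f (Set.Icc a b))
    (hM : ∀ x ∈ Set.Icc a b, |iteratedDerivWithin 2 f (Set.Icc a b) x| ≤ M) :
    let Δx : ℝ := (b - a) / N
    let x : ℕ → ℝ := fun k => a + k * Δx
    let T : ℝ := ∑ k ∈ Finset.Icc 1 N, (f (x (k - 1)) + f (x k)) / 2 * Δx
    |(∫ t in a..b, f t) - T| ≤ M * (b - a) ^ 3 / (12 * N ^ 2) := by
  intro Δx x T
  have hNR : (0:ℝ) < N := Nat.cast_pos.mpr hN
  have hΔx : 0 < Δx := div_pos (by linarith) hNR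
  set s := Set.Icc a b with hs_def
  have hs : UniqueDiffOn ℝ s := uniqueDiffOn_Icc hab
  set f' := derivWithin f s with hf'_def
  set f'' := derivWithin f' s with hf''_def
  have hf1 : ContDiffOn ℝ 1 f' s := hf.derivWithin hs (by norm_num)
  have hfc : ContinuousOn f s := hf.continuousOn
  have hf'c : ContinuousOn f' s := hf1.continuousOn
  have hf''c : ContinuousOn f'' s := hf1.continuousOn_derivWithin hs le_rfl
  have hd1 : ∀ t ∈ Set.Ioo a b, HasDerivAt f (f' t) t := by
    intro t ht
    have hmem : s ∈ nhds t := Icc_mem_nhds ht.1 ht.2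
    exact (((hf.differentiableOn (by norm_num)) t (Set.mem_Icc.mpr ⟨ht.1.le, ht.2.le⟩)
      ).hasDerivWithinAt).hasDerivAt hmem
  have hd2 : ∀ t ∈ Set.Ioo a b, HasDerivAt f' (f'' t) t := by
    intro t ht
    have hmem : s ∈ nhds t := Icc_mem_nhds ht.1 ht.2
    exact (((hf1.differentiableOn (by norm_num)) t (Set.mem_Icc.mpr ⟨ht.1.le, ht.2.le⟩)
      ).hasDerivWithinAt).hasDerivAt hmem
  have hM' : ∀ t ∈ s, |f'' t| ≤ M := by
    intro t ht
    have h2 : iteratedDerivWithin 2 f s t = f'' t := by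
      rw [iteratedDerivWithin_succ]
      exact congrArg (fun g => derivWithin g s t) iteratedDerivWithin_one
    rw [← h2]; exact hM t ht
  -- subinterval endpoints
  have hx0 : x 0 = a := by simp [x]
  have hxN : x N = b := by
    simp only [x, Δx]
    field_simp
    ring
  have hxmono : ∀ i, x (i + 1) - x i = Δx := by
    intro i; simp only [x]; push_cast; ring
  have hxa : ∀ i, i ≤ N → a ≤ x i ∧ x i ≤ b := by
    intro i hi
    constructor
    · have : (0:ℝ) ≤ i * Δx := by positivity
      simp only [x]; linarith
    · have hiN : (i:ℝ) ≤ N := Nat.cast_le.mpr hi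
      have : (i:ℝ) * Δx ≤ N * Δx := by
        apply mul_le_mul_of_nonneg_right hiN hΔx.le
      have hNb : (N:ℝ) * Δx = b - a := by simp only [Δx]; field_simp
      simp only [x]; linarith
  have hsub : ∀ i < N, Set.Icc (x i) (x (i + 1)) ⊆ s := by
    intro i hi
    apply Set.Icc_subset_Icc (hxa i (le_of_lt hi)).1 (hxa (i+1) hi).2
  have hle : ∀ i, x i ≤ x (i + 1) := fun i => by
    have := hxmono i; linarith
  -- per-interval bound
  have hbound : ∀ i < N,
      |(∫ t in x i..x (i + 1), f t) - (f (x i) + f (x (i + 1))) / 2 * Δx| ≤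
        M * Δx ^ 3 / 12 := by
    intro i hi
    have hsubi := hsub i hi
    have hIoo : Set.Ioo (x i) (x (i + 1)) ⊆ Set.Ioo a b := by
      apply Set.Ioo_subset_Ioo (hxa i (le_of_lt hi)).1 (hxa (i+1) hi).2
    have := trap_single (x i) (x (i + 1)) M (hle i) f f' f''
      (hfc.mono hsubi) (hf'c.mono hsubi) (hf''c.mono hsubi)
      (fun t ht => hd1 t (hIoo ht)) (fun t ht => hd2 t (hIoo ht))
      (fun t ht => hM' t (hsubi ht))
    rwa [hxmono i] at this
  -- integrability per piece
  have hint : ∀ i < N, IntervalIntegrable f volume (x i) (x (i + 1)) := by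
    intro i hi
    apply ContinuousOn.intervalIntegrable
    rw [Set.uIcc_of_le (hle i)]
    exact hfc.mono (hsub i hi)
  have hsplit : (∫ t in a..b, f t) =
      ∑ i ∈ Finset.range N, ∫ t in x i..x (i + 1), f t := by
    rw [intervalIntegral.sum_integral_adjacent_intervals hint, hx0, hxN]
  have hT : T = ∑ i ∈ Finset.range N, (f (x i) + f (x (i + 1))) / 2 * Δx := by
    show (∑ k ∈ Finset.Icc 1 N, (f (x (k - 1)) + f (x k)) / 2 * Δx) = _
    rw [← Finset.Ico_add_one_right_eq_Icc, Finset.sum_Ico_eq_sum_range]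
    simp [Nat.add_comm]
  rw [hsplit, hT, ← Finset.sum_sub_distrib]
  calc |∑ i ∈ Finset.range N, ((∫ t in x i..x (i + 1), f t) -
          (f (x i) + f (x (i + 1))) / 2 * Δx)| ≤
        ∑ i ∈ Finset.range N, |(∫ t in x i..x (i + 1), f t) -
          (f (x i) + f (x (i + 1))) / 2 * Δx| := Finset.abs_sum_le_sum_abs _ _
    _ ≤ ∑ i ∈ Finset.range N, M * Δx ^ 3 / 12 := by
        apply Finset.sum_le_sum
        intro i hi
        exact hbound i (Finset.mem_range.mp hi)
    _ = N * (M * Δx ^ 3 / 12) := by rw [Finset.sum_const, Finset.card_range]; ring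
    _ = M * (b - a) ^ 3 / (12 * N ^ 2) := by
        simp only [Δx]
        field_simp
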